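/- Let n ≥ 1 be an integer, M > 0, and let φ : ℝⁿ → ℝ satisfy φ(0) = 0 and |φ(x)−φ(y)| ≤ M|x−y| for all x,y ∈ ℝⁿ. Set C_M = 10(1+M). Let T be a surjective isometry of ℝ^{1+n} ≅ ℝ × ℝⁿ, let r > 0, and let Ω ⊆ ℝ^{1+n} be a set satisfying Ω ∩ T(R(C_M r)) = T(Ω_φ) ∩ T(R(C_M r)) and ∂Ω ∩ T(R(C_M r)) = T(∂Ω_φ) ∩ T(R(C_M r)). Then there exists a constant c > 0, depending only on M, such that for every x ∈ ℝⁿ with |x| < r and every t with 0 < t ≤ 3(1+M)r, the point A = T((φ(x)+t, x)) lies in Ω and satisfies c·t ≤ dist(A, ∂Ω) ≤ t. -/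

import Mathlib

open MeasureTheory Metric Set
open scoped ENNReal NNReal

/-- `ℝ^{1+n} = ℝ × ℝⁿ` with the Euclidean (L²) norm. -/
noncomputable abbrev UHS (n : ℕ) := WithLp 2 (ℝ × EuclideanSpace ℝ (Fin n))

noncomputable def mkH (n : ℕ) (t : ℝ) (x : EuclideanSpace ℝ (Fin n)) : UHS n :=
  (WithLp.equiv 2 (ℝ × EuclideanSpace ℝ (Fin n))).symm (t, x)

noncomputable def fstH {n : ℕ} (X : UHS n) : ℝ :=
  ((WithLp.equiv 2 (ℝ × EuclideanSpace ℝ (Fin n))) X).1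

noncomputable def sndH {n : ℕ} (X : UHS n) : EuclideanSpace ℝ (Fin n) :=
  ((WithLp.equiv 2 (ℝ × EuclideanSpace ℝ (Fin n))) X).2

/-- The special Lipschitz domain `Ω_φ = {(t,x) : t > φ(x)}`. -/
def specialDomain (n : ℕ) (φ : EuclideanSpace ℝ (Fin n) → ℝ) : Set (UHS n) :=
  {X | φ (sndH X) < fstH X}

/-- The open cylinder `R(s) = {(t,x) : |x| < s, |t| < (1+M)s}`. -/
def cylinder (n : ℕ) (M s : ℝ) : Set (UHS n) :=
  {X | ‖sndH X‖ < s ∧ |fstH X| < (1 + M) * s}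

lemma fstH_mkH (n : ℕ) (a : ℝ) (x : EuclideanSpace ℝ (Fin n)) : fstH (mkH n a x) = a := rfl

lemma sndH_mkH (n : ℕ) (a : ℝ) (x : EuclideanSpace ℝ (Fin n)) : sndH (mkH n a x) = x := rfl

lemma dist_fstH_le {n : ℕ} (X Y : UHS n) : |fstH X - fstH Y| ≤ dist X Y := by
  rw [WithLp.prod_dist_eq_of_L2]
  have h1 : |fstH X - fstH Y| = Real.sqrt (dist X.fst Y.fst ^ 2) := by
    rw [Real.sqrt_sq dist_nonneg]; rfl
  rw [h1]
  exact Real.sqrt_le_sqrt (le_add_of_nonneg_right (sq_nonneg _))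

lemma dist_sndH_le {n : ℕ} (X Y : UHS n) : ‖sndH X - sndH Y‖ ≤ dist X Y := by
  rw [WithLp.prod_dist_eq_of_L2]
  have h1 : ‖sndH X - sndH Y‖ = Real.sqrt (dist X.snd Y.snd ^ 2) := by
    rw [Real.sqrt_sq dist_nonneg, dist_eq_norm]; rfl
  rw [h1]
  exact Real.sqrt_le_sqrt (le_add_of_nonneg_left (sq_nonneg _))

lemma dist_mkH_same {n : ℕ} (a b : ℝ) (x : EuclideanSpace ℝ (Fin n)) :
    dist (mkH n a x) (mkH n b x) = |a - b| := by
  rw [WithLp.prod_dist_eq_of_L2]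
  have h1 : dist (mkH n a x).fst (mkH n b x).fst = |a - b| := Real.dist_eq a b
  have h2 : dist (mkH n a x).snd (mkH n b x).snd = 0 := dist_self x
  rw [h1, h2]
  simp [Real.sqrt_sq_eq_abs]

lemma continuous_fstH {n : ℕ} : Continuous (fstH (n := n)) :=
  (continuous_fst.comp (WithLp.prod_continuous_ofLp 2 ℝ (EuclideanSpace ℝ (Fin n))))

lemma continuous_sndH {n : ℕ} : Continuous (sndH (n := n)) :=
  (continuous_snd.comp (WithLp.prod_continuous_ofLp 2 ℝ (EuclideanSpace ℝ (Fin n))))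

lemma frontier_specialDomain_subset {n : ℕ} {M : ℝ} (hM : 0 ≤ M)
    (φ : EuclideanSpace ℝ (Fin n) → ℝ)
    (hLip : ∀ x y, |φ x - φ y| ≤ M * ‖x - y‖) :
    frontier (specialDomain n φ) ⊆ {X | fstH X = φ (sndH X)} := by
  have hφc : Continuous φ := by
    refine (LipschitzWith.of_dist_le_mul (K := ⟨M, hM⟩) fun x y => ?_).continuous
    rw [Real.dist_eq, dist_eq_norm]
    exact hLip x y
  have hf : Continuous (fun X : UHS n => fstH X - φ (sndH X)) :=
    continuous_fstH.sub (hφc.comp continuous_sndH)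
  intro X hX
  rw [frontier_eq_closure_inter_closure] at hX
  have h1 : X ∈ closure (specialDomain n φ) := hX.1
  have h2 : X ∈ closure (specialDomain n φ)ᶜ := hX.2
  have hle : 0 ≤ fstH X - φ (sndH X) := by
    have : closure (specialDomain n φ) ⊆ {X : UHS n | 0 ≤ fstH X - φ (sndH X)} := by
      apply closure_minimal
      · intro Y hY; exact le_of_lt (sub_pos.mpr (show φ (sndH Y) < fstH Y from hY))
      · exact isClosed_le continuous_const hf
    exact this h1
  have hge : fstH X - φ (sndH X) ≤ 0 := by
    have : closure (specialDomain n φ)ᶜ ⊆ {X : UHS n | fstH X - φ (sndH X) ≤ 0} := by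
      apply closure_minimal
      · intro Y hY
        simp only [specialDomain, mem_compl_iff, mem_setOf_eq, not_lt] at hY
        exact sub_nonpos.mpr hY
      · exact isClosed_le hf continuous_const
    exact this h2
  have : fstH X - φ (sndH X) = 0 := le_antisymm hge hle
  simpa [sub_eq_zero] using this

lemma graph_mem_frontier {n : ℕ} (φ : EuclideanSpace ℝ (Fin n) → ℝ)
    (x : EuclideanSpace ℝ (Fin n)) :
    mkH n (φ x) x ∈ frontier (specialDomain n φ) := by
  rw [frontier_eq_closure_inter_closure]
  constructor
  · rw [Metric.mem_closure_iff]
    intro ε hε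
    refine ⟨mkH n (φ x + ε / 2) x, ?_, ?_⟩
    · simp [specialDomain, sndH_mkH, fstH_mkH]
      linarith
    · rw [dist_mkH_same]
      rw [abs_sub_comm, add_sub_cancel_left, abs_of_pos (by linarith)]
      linarith
  · rw [Metric.mem_closure_iff]
    intro ε hε
    refine ⟨mkH n (φ x - ε / 2) x, ?_, ?_⟩
    · simp [specialDomain, sndH_mkH, fstH_mkH]
      linarith
    · rw [dist_mkH_same]
      rw [sub_sub_cancel, abs_of_pos (by linarith)]
      linarith

theorem statement16 (n : ℕ) (hn : 1 ≤ n) (M : ℝ) (hM : 0 < M) :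
    ∃ c : ℝ, 0 < c ∧
      ∀ φ : EuclideanSpace ℝ (Fin n) → ℝ, φ 0 = 0 →
        (∀ x y : EuclideanSpace ℝ (Fin n), |φ x - φ y| ≤ M * ‖x - y‖) →
        ∀ (T : UHS n ≃ᵢ UHS n) (r : ℝ), 0 < r →
          ∀ Ω : Set (UHS n),
            Ω ∩ T '' cylinder n M (10 * (1 + M) * r) =
              (T '' specialDomain n φ) ∩ T '' cylinder n M (10 * (1 + M) * r) →
            frontier Ω ∩ T '' cylinder n M (10 * (1 + M) * r) =
              (T '' frontier (specialDomain n φ)) ∩ T '' cylinder n M (10 * (1 + M) * r) →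
            ∀ (x : EuclideanSpace ℝ (Fin n)) (t : ℝ), ‖x‖ < r →
              0 < t → t ≤ 3 * (1 + M) * r →
              T (mkH n (φ x + t) x) ∈ Ω ∧
              c * t ≤ Metric.infDist (T (mkH n (φ x + t) x)) (frontier Ω) ∧
              Metric.infDist (T (mkH n (φ x + t) x)) (frontier Ω) ≤ t := by
  have hM1 : (0:ℝ) < 1 + M := by linarith
  refine ⟨1 / (1 + M), by positivity, ?_⟩
  intro φ hφ0 hLip T r hr Ω hΩ hFr x t hx ht ht3
  set c : ℝ := 1 / (1 + M) with hc_def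
  have hc : c * (1 + M) = 1 := by rw [hc_def]; field_simp
  have hcpos : 0 < c := by positivity
  set s : ℝ := 10 * (1 + M) * r with hs_def
  set K := T '' cylinder n M s with hK_def
  set A0 := mkH n (φ x + t) x with hA0_def
  set B0 := mkH n (φ x) x with hB0_def
  -- bound on |φ x|
  have hφx : |φ x| ≤ M * ‖x‖ := by
    have := hLip x 0
    simpa [hφ0] using this
  have hφxr : |φ x| ≤ M * r := hφx.trans (by nlinarith)
  -- A0 ∈ cylinder
  have hA0cyl : A0 ∈ cylinder n M s := by
    constructor
    · rw [hA0_def, sndH_mkH]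
      nlinarith
    · rw [hA0_def, fstH_mkH]
      have : |φ x + t| ≤ |φ x| + t := by
        calc |φ x + t| ≤ |φ x| + |t| := abs_add_le _ _
        _ = |φ x| + t := by rw [abs_of_pos ht]
      have h2 : |φ x + t| ≤ M * r + 3 * (1 + M) * r := by linarith
      calc |φ x + t| ≤ M * r + 3 * (1 + M) * r := h2
      _ < (1 + M) * s := by rw [hs_def]; nlinarith
  -- B0 ∈ cylinder
  have hB0cyl : B0 ∈ cylinder n M s := by
    constructor
    · rw [hB0_def, sndH_mkH]
      nlinarith
    · rw [hB0_def, fstH_mkH]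
      calc |φ x| ≤ M * r := hφxr
      _ < (1 + M) * s := by rw [hs_def]; nlinarith
  -- A ∈ Ω
  have hA0sd : A0 ∈ specialDomain n φ := by
    show φ (sndH A0) < fstH A0
    rw [hA0_def, sndH_mkH, fstH_mkH]
    linarith
  have hAΩ : T A0 ∈ Ω := by
    have : T A0 ∈ (T '' specialDomain n φ) ∩ K :=
      ⟨mem_image_of_mem T hA0sd, mem_image_of_mem T hA0cyl⟩
    rw [← hΩ] at this
    exact this.1
  -- T B0 ∈ frontier Ω
  have hB0fr : B0 ∈ frontier (specialDomain n φ) := graph_mem_frontier φ x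
  have hTB0 : T B0 ∈ frontier Ω := by
    have : T B0 ∈ (T '' frontier (specialDomain n φ)) ∩ K :=
      ⟨mem_image_of_mem T hB0fr, mem_image_of_mem T hB0cyl⟩
    rw [← hFr] at this
    exact this.1
  refine ⟨hAΩ, ?_, ?_⟩
  · -- lower bound
    by_contra hcon
    push_neg at hcon
    rw [Metric.infDist_lt_iff ⟨T B0, hTB0⟩] at hcon
    obtain ⟨y, hyfr, hdy⟩ := hcon
    -- show c * t ≤ dist (T A0) y always
    have key : c * t ≤ dist (T A0) y := by
      by_cases hyK : y ∈ K
      · -- y ∈ image of graph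
        have : y ∈ (T '' frontier (specialDomain n φ)) ∩ K := by
          rw [← hFr]; exact ⟨hyfr, hyK⟩
        obtain ⟨W, hWfr, hWy⟩ := this.1
        have hWgraph : fstH W = φ (sndH W) :=
          frontier_specialDomain_subset hM.le φ hLip hWfr
        rw [← hWy, T.dist_eq]
        set d := ‖x - sndH W‖ with hd_def
        have hd0 : 0 ≤ d := norm_nonneg _
        by_cases hdl : c * t ≤ d
        · calc c * t ≤ d := hdl
          _ = ‖sndH A0 - sndH W‖ := by rw [hd_def, hA0_def, sndH_mkH]
          _ ≤ dist A0 W := dist_sndH_le A0 W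
        · push_neg at hdl
          have hφd : |φ x - φ (sndH W)| ≤ M * d := hLip x (sndH W)
          have h1 : c * t ≤ (φ x + t) - fstH W := by
            rw [hWgraph]
            have : φ x - φ (sndH W) ≥ -(M * d) := by
              have := abs_le.mp hφd
              linarith [this.1]
            nlinarith
          calc c * t ≤ (φ x + t) - fstH W := h1
          _ ≤ |fstH A0 - fstH W| := by
              rw [hA0_def, fstH_mkH]; exact le_abs_self _
          _ ≤ dist A0 W := dist_fstH_le A0 W
      · -- y outside K
        obtain ⟨W, hWy⟩ : ∃ W, T W = y := ⟨T.symm y, T.apply_symm_apply y⟩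
        have hWcyl : W ∉ cylinder n M s := by
          intro h
          exact hyK ⟨W, h, hWy⟩
        rw [← hWy, T.dist_eq]
        have hct : c * t ≤ 3 * r := by
          have ha : c * t ≤ c * (3 * (1 + M) * r) := by nlinarith
          have hb : c * (3 * (1 + M) * r) = 3 * r := by
            rw [hc_def]; field_simp
          linarith
        simp only [_root_.cylinder, mem_setOf_eq, not_and_or, not_lt] at hWcyl
        rcases hWcyl with h1 | h2
        · have hlow : s - ‖x‖ ≤ ‖x - sndH W‖ := by
            have := norm_sub_norm_le (sndH W) x
            rw [norm_sub_rev] at this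
            linarith
          have hst : c * t ≤ s - ‖x‖ := by
            rw [hs_def]
            have hMr : 0 < M * r := mul_pos hM hr
            linarith
          calc c * t ≤ ‖x - sndH W‖ := by linarith
          _ = ‖sndH A0 - sndH W‖ := by rw [hA0_def, sndH_mkH]
          _ ≤ dist A0 W := dist_sndH_le A0 W
        · have habs : |φ x + t| ≤ M * r + 3 * (1 + M) * r := by
            have : |φ x + t| ≤ |φ x| + |t| := abs_add_le _ _
            rw [abs_of_pos ht] at this
            linarith
          have h3 : (1 + M) * s - |φ x + t| ≤ |fstH A0 - fstH W| := by
            have := abs_sub_abs_le_abs_sub (fstH W) (fstH A0)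
            rw [abs_sub_comm] at this
            have hfA : fstH A0 = φ x + t := by rw [hA0_def, fstH_mkH]
            rw [hfA] at this ⊢
            linarith
          have hst : c * t ≤ (1 + M) * s - |φ x + t| := by
            rw [hs_def]
            have hMr : 0 < M * r := mul_pos hM hr
            have hMMr : 0 < M * (M * r) := mul_pos hM hMr
            have he1 : (1 + M) * (10 * (1 + M) * r) = 10 * r + 20 * (M * r) + 10 * (M * (M * r)) := by ring
            have he2 : M * r + 3 * (1 + M) * r = 3 * r + 4 * (M * r) := by ring
            linarith
          calc c * t ≤ |fstH A0 - fstH W| := by linarith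
          _ ≤ dist A0 W := dist_fstH_le A0 W
    linarith [key, hdy]
  · -- upper bound
    calc Metric.infDist (T A0) (frontier Ω) ≤ dist (T A0) (T B0) :=
          Metric.infDist_le_dist_of_mem hTB0
    _ = dist A0 B0 := T.dist_eq A0 B0
    _ = |φ x + t - φ x| := dist_mkH_same _ _ _
    _ = t := by rw [add_sub_cancel_left, abs_of_pos ht]
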